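/- A tensor function Φ: M → Sym(n) on an isotropic set M is isotropic if and only if there exist scalar-valued functions α₀,…,α_{n−1} depending only on the matrix invariants of X (equivalently, invariant under X ↦ Qᵀ X Q) such that Φ(X) = α₀ I + α₁ X + ⋯ + α_{n−1} X^{n−1} for all X ∈ M. -/

import Mathlib

open Matrix

/-- A matrix is orthogonal. -/
def IsOrthogonal {n : ℕ} (Q : Matrix (Fin n) (Fin n) ℝ) : Prop :=
  Q * Qᵀ = 1 ∧ Qᵀ * Q = 1

namespace RivlinAux

variable {n : ℕ}

lemma conj_pow (Q A : Matrix (Fin n) (Fin n) ℝ) (hQ : IsOrthogonal Q) (k : ℕ) :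
    (Qᵀ * A * Q) ^ k = Qᵀ * A ^ k * Q := by
  induction k with
  | zero => simp [hQ.2]
  | succ k ih =>
    rw [pow_succ, pow_succ, ih]
    calc Qᵀ * A ^ k * Q * (Qᵀ * A * Q) = Qᵀ * A ^ k * (Q * Qᵀ) * A * Q := by
          simp only [Matrix.mul_assoc]
      _ = Qᵀ * (A ^ k * A) * Q := by rw [hQ.1]; simp only [Matrix.mul_assoc, Matrix.mul_one]

lemma vecMulVec_mulVec (v w u : Fin n → ℝ) :
    vecMulVec v w *ᵥ u = (w ⬝ᵥ u) • v := by
  ext i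
  simp [mulVec, dotProduct, vecMulVec_apply, Finset.mul_sum, mul_assoc, mul_comm, mul_left_comm]

lemma mul_vecMulVec (A : Matrix (Fin n) (Fin n) ℝ) (v w : Fin n → ℝ) :
    A * vecMulVec v w = vecMulVec (A *ᵥ v) w := by
  ext i j
  simp [mul_apply, vecMulVec_apply, mulVec, dotProduct, Finset.sum_mul, mul_assoc]

lemma vecMulVec_mul (v w : Fin n → ℝ) (A : Matrix (Fin n) (Fin n) ℝ) :
    vecMulVec v w * A = vecMulVec v (Aᵀ *ᵥ w) := by
  ext i j
  simp [mul_apply, vecMulVec_apply, mulVec, dotProduct, Finset.mul_sum, mul_assoc, mul_comm,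
    mul_left_comm]

lemma smul_vecMulVec (c : ℝ) (v w : Fin n → ℝ) :
    vecMulVec (c • v) w = c • vecMulVec v w := by
  ext i j; simp [vecMulVec_apply, mul_assoc]

lemma vecMulVec_smul (c : ℝ) (v w : Fin n → ℝ) :
    vecMulVec v (c • w) = c • vecMulVec v w := by
  ext i j; simp [vecMulVec_apply]; ring

/-- Householder-type step: unit eigenvectors of X are eigenvectors of Y. -/
lemma eigvec_step (X Y : Matrix (Fin n) (Fin n) ℝ) (hX : X.IsSymm)
    (hY : ∀ Q, IsOrthogonal Q → Qᵀ * X * Q = X → Qᵀ * Y * Q = Y)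
    (v : Fin n → ℝ) (hv : v ⬝ᵥ v = 1) (lam : ℝ) (hXv : X *ᵥ v = lam • v) :
    Y *ᵥ v = (v ⬝ᵥ (Y *ᵥ v)) • v := by
  set P : Matrix (Fin n) (Fin n) ℝ := vecMulVec v v with hP
  have hPsymm : Pᵀ = P := by
    ext i j; simp [hP, vecMulVec_apply, transpose_apply, mul_comm]
  have hPP : P * P = P := by
    rw [hP, mul_vecMulVec, vecMulVec_mulVec, hv, one_smul]
  have hXP : X * P = lam • P := by
    rw [hP, mul_vecMulVec, hXv, smul_vecMulVec]
  have hPX : P * X = lam • P := by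
    rw [hP, vecMulVec_mul, hX.eq, hXv, vecMulVec_smul]
  set H : Matrix (Fin n) (Fin n) ℝ := 1 - (2:ℝ) • P with hH
  have hHsymm : Hᵀ = H := by
    rw [hH, transpose_sub, transpose_one, transpose_smul, hPsymm]
  have hHH : H * H = 1 := by
    rw [hH]
    simp only [Matrix.sub_mul, Matrix.mul_sub, Matrix.one_mul, Matrix.mul_one,
      Matrix.smul_mul, Matrix.mul_smul, hPP, smul_smul]
    module
  have hHorth : IsOrthogonal H := by
    constructor <;> rw [hHsymm] <;> exact hHH
  have hHXH : Hᵀ * X * H = X := by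
    rw [hHsymm, hH]
    simp only [Matrix.sub_mul, Matrix.mul_sub, Matrix.one_mul, Matrix.mul_one,
      Matrix.smul_mul, Matrix.mul_smul, hPX, hXP, smul_smul, hPP]
    module
  have hYH := hY H hHorth hHXH
  rw [hHsymm] at hYH
  have hcomm : P * Y = Y * P := by
    have h1 : H * Y = Y * H := by
      calc H * Y = H * Y * (H * H) := by rw [hHH, Matrix.mul_one]
        _ = (H * Y * H) * H := by simp only [Matrix.mul_assoc]
        _ = Y * H := by rw [hYH]
    rw [hH] at h1
    simp only [Matrix.sub_mul, Matrix.mul_sub, Matrix.one_mul, Matrix.mul_one,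
      Matrix.smul_mul, Matrix.mul_smul] at h1
    rw [sub_right_inj] at h1
    exact smul_right_injective (Matrix (Fin n) (Fin n) ℝ) (two_ne_zero (α := ℝ)) h1
  have hPv : P *ᵥ v = v := by
    rw [hP, vecMulVec_mulVec, hv, one_smul]
  calc Y *ᵥ v = Y *ᵥ (P *ᵥ v) := by rw [hPv]
    _ = (Y * P) *ᵥ v := by rw [Matrix.mulVec_mulVec]
    _ = (P * Y) *ᵥ v := by rw [hcomm]
    _ = P *ᵥ (Y *ᵥ v) := by rw [Matrix.mulVec_mulVec]
    _ = (v ⬝ᵥ (Y *ᵥ v)) • v := by rw [hP, vecMulVec_mulVec]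

end RivlinAux

namespace RivlinAux2
open RivlinAux

variable {n : ℕ}

lemma sum_mulVec {ι : Type*} (s : Finset ι) (M : ι → Matrix (Fin n) (Fin n) ℝ)
    (v : Fin n → ℝ) : (∑ k ∈ s, M k) *ᵥ v = ∑ k ∈ s, M k *ᵥ v := by
  ext i
  simp [Matrix.mulVec, dotProduct, Matrix.sum_apply, Finset.sum_mul]
  rw [Finset.sum_comm]

/-- nonunit version of eigvec_step -/
lemma eigvec_step' (X Y : Matrix (Fin n) (Fin n) ℝ) (hX : X.IsSymm)
    (hY : ∀ Q, IsOrthogonal Q → Qᵀ * X * Q = X → Qᵀ * Y * Q = Y)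
    (v : Fin n → ℝ) (hv : v ≠ 0) (lam : ℝ) (hXv : X *ᵥ v = lam • v) :
    ∃ c : ℝ, Y *ᵥ v = c • v := by
  set t : ℝ := v ⬝ᵥ v with ht
  have ht0 : 0 < t := by
    have hnn : 0 ≤ t := Finset.sum_nonneg fun i _ => mul_self_nonneg _
    rcases lt_or_eq_of_le hnn with h | h
    · exact h
    · exact absurd (dotProduct_self_eq_zero.mp h.symm) hv
  set u : Fin n → ℝ := (Real.sqrt t)⁻¹ • v with hu
  have hst : Real.sqrt t ≠ 0 := ne_of_gt (Real.sqrt_pos.mpr ht0)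
  have huu : u ⬝ᵥ u = 1 := by
    rw [hu, smul_dotProduct, dotProduct_smul, smul_eq_mul, smul_eq_mul, ← ht,
      ← mul_assoc, ← mul_inv, Real.mul_self_sqrt ht0.le]
    exact inv_mul_cancel₀ (ne_of_gt ht0)
  have hXu : X *ᵥ u = lam • u := by
    rw [hu, Matrix.mulVec_smul, hXv, smul_comm]
  have h := eigvec_step X Y hX hY u huu lam hXu
  refine ⟨u ⬝ᵥ (Y *ᵥ u), ?_⟩
  have hv' : v = Real.sqrt t • u := by
    rw [hu, smul_smul, mul_inv_cancel₀ hst, one_smul]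
  conv_lhs => rw [hv', Matrix.mulVec_smul, h]
  rw [smul_comm, hv']

lemma exists_poly_rep (hn : 0 < n) (X Y : Matrix (Fin n) (Fin n) ℝ) (hX : X.IsSymm)
    (hY : ∀ Q, IsOrthogonal Q → Qᵀ * X * Q = X → Qᵀ * Y * Q = Y) :
    ∃ c : Fin n → ℝ, Y = ∑ k : Fin n, c k • X ^ (k : ℕ) := by
  have hherm : X.IsHermitian := by
    rw [Matrix.IsHermitian, Matrix.conjTranspose_eq_transpose_of_trivial]; exact hX
  set b := hherm.eigenvectorBasis with hb
  set μ := hherm.eigenvalues with hμ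
  have hunit : ∀ j, (⇑(b j) : Fin n → ℝ) ⬝ᵥ ⇑(b j) = 1 := by
    intro j
    have := orthonormal_iff_ite.mp b.orthonormal j j
    simp only [if_pos rfl] at this
    rw [PiLp.inner_apply] at this
    simpa [dotProduct, mul_comm, sq] using this
  have horth : ∀ i j, i ≠ j → (⇑(b i) : Fin n → ℝ) ⬝ᵥ ⇑(b j) = 0 := by
    intro i j hij
    have := orthonormal_iff_ite.mp b.orthonormal i j
    rw [if_neg hij] at this
    simpa [PiLp.inner_apply, dotProduct, mul_comm] using this
  set c : Fin n → ℝ := fun j => (⇑(b j) : Fin n → ℝ) ⬝ᵥ (Y *ᵥ ⇑(b j)) with hc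
  have hYb : ∀ j, Y *ᵥ ⇑(b j) = c j • ⇑(b j) := by
    intro j
    exact eigvec_step X Y hX hY _ (hunit j) (μ j) (hherm.mulVec_eigenvectorBasis j)
  -- equal eigenvalues give equal coefficients
  have hsame : ∀ i j, μ i = μ j → c i = c j := by
    intro i j hij
    rcases eq_or_ne i j with rfl | hne
    · rfl
    set v : Fin n → ℝ := ⇑(b i) with hv
    set w : Fin n → ℝ := ⇑(b j) with hw
    have huv0 : v ⬝ᵥ w = 0 := horth i j hne
    have hij' : hherm.eigenvalues i = hherm.eigenvalues j := hij
    have hXu : X *ᵥ (v + w) = μ i • (v + w) := by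
      rw [Matrix.mulVec_add, hherm.mulVec_eigenvectorBasis, hherm.mulVec_eigenvectorBasis,
        ← hij', smul_add]
    have hne0 : v + w ≠ 0 := by
      intro h
      have : v ⬝ᵥ (v + w) = 1 := by
        rw [dotProduct_add, hunit i, huv0, add_zero]
      rw [h, dotProduct_zero] at this
      norm_num at this
    obtain ⟨ρ, hρ⟩ := eigvec_step' X Y hX hY (v + w) hne0 (μ i) hXu
    rw [Matrix.mulVec_add, hYb i, hYb j] at hρ
    have h1 : c i = ρ := by
      have := congrArg (fun z => v ⬝ᵥ z) hρ
      have hvv : v ⬝ᵥ v = 1 := hunit i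
      rw [← hv, ← hw] at this
      simpa [dotProduct_add, dotProduct_smul, hvv, huv0] using this
    have h2 : c j = ρ := by
      have := congrArg (fun z => w ⬝ᵥ z) hρ
      have hwv0 : w ⬝ᵥ v = 0 := horth j i (Ne.symm hne)
      have hww : w ⬝ᵥ w = 1 := hunit j
      rw [← hv, ← hw] at this
      simpa [dotProduct_add, dotProduct_smul, hww, hwv0] using this
    rw [h1, h2]
  -- Lagrange interpolation
  classical
  set s : Finset ℝ := Finset.image μ Finset.univ with hs
  set r : ℝ → ℝ := fun t => if h : ∃ j, μ j = t then c h.choose else 0 with hr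
  set p : Polynomial ℝ := Lagrange.interpolate s id r with hp
  have hrμ : ∀ j, r (μ j) = c j := by
    intro j
    have hex : ∃ i, μ i = μ j := ⟨j, rfl⟩
    rw [hr]
    simp only [dif_pos hex]
    exact hsame _ _ hex.choose_spec
  have heval : ∀ j, p.eval (μ j) = c j := by
    intro j
    have hmem : μ j ∈ s := Finset.mem_image_of_mem μ (Finset.mem_univ j)
    have h2 := Lagrange.eval_interpolate_at_node r (Set.injOn_id _) hmem
    calc p.eval (μ j) = r (μ j) := by rw [hp]; simpa using h2
      _ = c j := hrμ j
  have hnat : p.natDegree < n := by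
    rcases eq_or_ne p 0 with h0 | h0
    · rw [h0]; simpa using hn
    · rw [Polynomial.natDegree_lt_iff_degree_lt h0]
      refine lt_of_lt_of_le (Lagrange.degree_interpolate_lt r (Set.injOn_id _)) ?_
      have : s.card ≤ n := by
        calc s.card ≤ Finset.univ.card := Finset.card_image_le
          _ = n := by simp
      exact_mod_cast this
  set A : Matrix (Fin n) (Fin n) ℝ := ∑ k : Fin n, p.coeff k • X ^ (k : ℕ) with hA
  have hXpow : ∀ (k : ℕ) (j : Fin n), X ^ k *ᵥ ⇑(b j) = μ j ^ k • ⇑(b j) := by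
    intro k j
    induction k with
    | zero => simp
    | succ k ih =>
      rw [pow_succ, ← Matrix.mulVec_mulVec, hherm.mulVec_eigenvectorBasis,
        Matrix.mulVec_smul, ih, smul_smul]
      congr 1
      show hherm.eigenvalues j * μ j ^ k = μ j ^ (k + 1)
      show μ j * μ j ^ k = μ j ^ (k + 1)
      ring
  have hAb : ∀ j, A *ᵥ ⇑(b j) = Y *ᵥ ⇑(b j) := by
    intro j
    rw [hA, sum_mulVec]
    have : ∀ k : Fin n, (p.coeff k • X ^ (k : ℕ)) *ᵥ ⇑(b j)
        = (p.coeff k * μ j ^ (k : ℕ)) • ⇑(b j) := by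
      intro k
      rw [Matrix.smul_mulVec, hXpow, smul_smul]
    rw [Finset.sum_congr rfl fun k _ => this k, ← Finset.sum_smul, hYb j, ← heval j,
      Polynomial.eval_eq_sum_range' hnat]
    congr 1
    exact Fin.sum_univ_eq_sum_range (fun m => p.coeff m * μ j ^ m) n
  have hAY : A = Y := by
    have h1 : Matrix.toEuclideanLin A = Matrix.toEuclideanLin Y := by
      apply Module.Basis.ext b.toBasis
      intro j
      have := hAb j
      simp only [OrthonormalBasis.coe_toBasis]
      exact congrArg (WithLp.equiv 2 (Fin n → ℝ)).symm (hAb j)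
    exact Matrix.toEuclideanLin.injective h1
  exact ⟨fun k => p.coeff k, hAY.symm⟩

end RivlinAux2

namespace RivlinAux3
open RivlinAux RivlinAux2

variable {n : ℕ}

lemma exists_poly_rep' (X Y : Matrix (Fin n) (Fin n) ℝ) (hX : X.IsSymm)
    (hY : ∀ Q, IsOrthogonal Q → Qᵀ * X * Q = X → Qᵀ * Y * Q = Y) :
    ∃ c : Fin n → ℝ, Y = ∑ k : Fin n, c k • X ^ (k : ℕ) := by
  rcases Nat.eq_zero_or_pos n with rfl | hn
  · exact ⟨0, by ext i j; exact i.elim0⟩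
  · exact exists_poly_rep hn X Y hX hY

def orbitSetoid (n : ℕ) : Setoid (Matrix (Fin n) (Fin n) ℝ) where
  r X Y := ∃ Q, IsOrthogonal Q ∧ Y = Qᵀ * X * Q
  iseqv := by
    constructor
    · intro X
      exact ⟨1, ⟨by simp, by simp⟩, by simp⟩
    · rintro X Y ⟨Q, hQ, rfl⟩
      refine ⟨Qᵀ, ⟨by rw [transpose_transpose]; exact hQ.2, by rw [transpose_transpose]; exact hQ.1⟩, ?_⟩
      rw [transpose_transpose]
      calc X = (Q * Qᵀ) * X * (Q * Qᵀ) := by rw [hQ.1]; simp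
        _ = Q * (Qᵀ * X * Q) * Qᵀ := by simp only [Matrix.mul_assoc]
    · rintro X Y Z ⟨Q, hQ, rfl⟩ ⟨P, hP, rfl⟩
      refine ⟨Q * P, ⟨?_, ?_⟩, ?_⟩
      · rw [transpose_mul]
        calc Q * P * (Pᵀ * Qᵀ) = Q * (P * Pᵀ) * Qᵀ := by simp only [Matrix.mul_assoc]
          _ = 1 := by rw [hP.1, Matrix.mul_one, hQ.1]
      · rw [transpose_mul]
        calc Pᵀ * Qᵀ * (Q * P) = Pᵀ * (Qᵀ * Q) * P := by simp only [Matrix.mul_assoc]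
          _ = 1 := by rw [hQ.2, Matrix.mul_one, hP.2]
      · rw [transpose_mul]
        simp only [Matrix.mul_assoc]

end RivlinAux3

/-- A tensor function Φ : M → Sym(n) on an isotropic set
M ⊂ Sym(n) is isotropic iff there are scalar-valued functions α₀,…,α_{n−1},
depending only on the matrix invariants of X (i.e. invariant under
X ↦ Qᵀ X Q), with Φ(X) = ∑_{k=0}^{n-1} αₖ(X) Xᵏ for all X ∈ M. -/
theorem isotropic_iff_invariant_polynomial_representation {n : ℕ}
    (M : Set (Matrix (Fin n) (Fin n) ℝ))
    (hMsym : ∀ X ∈ M, X.IsSymm)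
    (hMiso : ∀ X ∈ M, ∀ Q : Matrix (Fin n) (Fin n) ℝ, IsOrthogonal Q →
      Qᵀ * X * Q ∈ M)
    (Φ : Matrix (Fin n) (Fin n) ℝ → Matrix (Fin n) (Fin n) ℝ)
    (hΦsym : ∀ X ∈ M, (Φ X).IsSymm) :
    (∀ X ∈ M, ∀ Q : Matrix (Fin n) (Fin n) ℝ, IsOrthogonal Q →
        Φ (Qᵀ * X * Q) = Qᵀ * Φ X * Q) ↔
    (∃ α : Fin n → (Matrix (Fin n) (Fin n) ℝ → ℝ),
      (∀ k : Fin n, ∀ X ∈ M, ∀ Q : Matrix (Fin n) (Fin n) ℝ, IsOrthogonal Q →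
        α k (Qᵀ * X * Q) = α k X) ∧
      ∀ X ∈ M, Φ X = ∑ k : Fin n, α k X • X ^ (k : ℕ)) := by
  classical
  constructor
  · intro hΦ
    letI S : Setoid (Matrix (Fin n) (Fin n) ℝ) := RivlinAux3.orbitSetoid n
    set rep : Matrix (Fin n) (Fin n) ℝ → Matrix (Fin n) (Fin n) ℝ :=
      fun X => (⟦X⟧ : Quotient S).out with hrepdef
    have hrep_eq : ∀ (X Q : Matrix (Fin n) (Fin n) ℝ), IsOrthogonal Q →
        rep (Qᵀ * X * Q) = rep X := by
      intro X Q hQ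
      have h : (⟦X⟧ : Quotient S) = ⟦Qᵀ * X * Q⟧ := Quotient.sound ⟨Q, hQ, rfl⟩
      rw [hrepdef]
      simp only [← h]
    have hrep_rel : ∀ X : Matrix (Fin n) (Fin n) ℝ,
        ∃ Q, IsOrthogonal Q ∧ X = Qᵀ * (rep X) * Q := by
      intro X
      have h : (⟦rep X⟧ : Quotient S) = ⟦X⟧ := Quotient.out_eq _
      exact Quotient.exact h
    set F : Matrix (Fin n) (Fin n) ℝ → (Fin n → ℝ) := fun Z =>
      if h : ∃ c : Fin n → ℝ, Φ Z = ∑ k : Fin n, c k • Z ^ (k : ℕ) then h.choose else 0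
      with hF
    refine ⟨fun k X => F (rep X) k, fun k X _ Q hQ => by simp only; rw [hrep_eq X Q hQ], ?_⟩
    intro X hXM
    obtain ⟨Q, hQ, hXR⟩ := hrep_rel X
    set R := rep X with hR
    have hRM : R ∈ M := by
      have h2 : R = (Qᵀ)ᵀ * X * Qᵀ := by
        rw [transpose_transpose]
        calc R = (Q * Qᵀ) * R * (Q * Qᵀ) := by rw [hQ.1]; simp
          _ = Q * (Qᵀ * R * Q) * Qᵀ := by simp only [Matrix.mul_assoc]
          _ = Q * X * Qᵀ := by rw [← hXR]
      rw [h2]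
      exact hMiso X hXM Qᵀ ⟨by rw [transpose_transpose]; exact hQ.2,
        by rw [transpose_transpose]; exact hQ.1⟩
    have hER : ∃ c : Fin n → ℝ, Φ R = ∑ k : Fin n, c k • R ^ (k : ℕ) := by
      apply RivlinAux3.exists_poly_rep' R (Φ R) (hMsym R hRM)
      intro P hP hfix
      have := hΦ R hRM P hP
      rw [hfix] at this
      exact this.symm
    have hFR : Φ R = ∑ k : Fin n, F R k • R ^ (k : ℕ) := by
      rw [hF]
      simp only [dif_pos hER]
      exact hER.choose_spec
    calc Φ X = Φ (Qᵀ * R * Q) := by rw [← hXR]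
      _ = Qᵀ * Φ R * Q := hΦ R hRM Q hQ
      _ = Qᵀ * (∑ k : Fin n, F R k • R ^ (k : ℕ)) * Q := by rw [hFR]
      _ = ∑ k : Fin n, F R k • (Qᵀ * R * Q) ^ (k : ℕ) := by
          rw [Finset.mul_sum, Finset.sum_mul]
          refine Finset.sum_congr rfl fun k _ => ?_
          rw [RivlinAux.conj_pow Q R hQ, Matrix.mul_smul, Matrix.smul_mul]
      _ = ∑ k : Fin n, F (rep X) k • X ^ (k : ℕ) := by rw [← hXR, ← hR]
  · rintro ⟨α, hαinv, hαrep⟩ X hX Q hQ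
    have hXQ : Qᵀ * X * Q ∈ M := hMiso X hX Q hQ
    rw [hαrep _ hXQ, hαrep X hX, Finset.mul_sum, Finset.sum_mul]
    refine Finset.sum_congr rfl fun k _ => ?_
    rw [hαinv k X hX Q hQ, RivlinAux.conj_pow Q X hQ, Matrix.mul_smul, Matrix.smul_mul]
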